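/- (Cumulative-potential–elliptical-potential inequality) Let V be a real Hilbert space, λ > 0, and let g_1,…,g_T ∈ V. Define A_0 = λI, ζ_0 = 0, A_t = A_{t-1} + g_t ⊗ g_t, and ζ_t = ζ_{t-1} + g_t for t = 1,…,T, and the cumulative potential Φ_t = ⟨ζ_t, A_t^{-1} ζ_t⟩. If the sign condition ⟨g_t, A_{t-1}^{-1} ζ_{t-1}⟩ ≤ 0 holds for every t = 1,…,T (as it does for the iterates of CoRectron), then Φ_T ≤ Σ_{t=1}^T ⟨g_t, A_t^{-1} g_t⟩. -/

import Mathlib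

open scoped RealInnerProductSpace

/-- The rank-one operator `a ⊗ a : v ↦ ⟪a, v⟫ • a` on a real inner product space. -/
noncomputable def rankOne {V : Type*} [NormedAddCommGroup V] [InnerProductSpace ℝ V]
    (a : V) : V →L[ℝ] V :=
  (innerSL ℝ a).smulRight a

lemma rankOne_apply {V : Type*} [NormedAddCommGroup V] [InnerProductSpace ℝ V]
    (a v : V) : rankOne a v = ⟪a, v⟫ • a := rfl

/-- A symmetric coercive continuous linear operator on a real Hilbert space is a unit. -/
lemma coercive_isUnit {V : Type*} [NormedAddCommGroup V] [InnerProductSpace ℝ V]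
    [CompleteSpace V] {lam : ℝ} (hlam : 0 < lam) {A : V →L[ℝ] V}
    (h : ∀ v, lam * ‖v‖ ^ 2 ≤ ⟪v, A v⟫) : IsUnit A := by
  have hc : IsCoercive ((innerSL ℝ).comp A) := by
    refine ⟨lam, hlam, fun u => ?_⟩
    have := h u
    simpa [real_inner_comm, sq, mul_assoc] using this
  have hAE : ((hc.continuousLinearEquivOfBilin : V ≃L[ℝ] V) : V →L[ℝ] V) = A := by
    ext v
    refine ext_inner_right ℝ (fun w => ?_)
    rw [ContinuousLinearEquiv.coe_coe, hc.continuousLinearEquivOfBilin_apply]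
    rfl
  rw [ContinuousLinearMap.isUnit_iff_bijective, ← hAE]
  exact hc.continuousLinearEquivOfBilin.bijective

/-- Cumulative-potential–elliptical-potential inequality: with `A_0 = λI`, `ζ_0 = 0`,
`A_t = A_{t-1} + g_t ⊗ g_t`, `ζ_t = ζ_{t-1} + g_t`, and the sign condition
`⟪g_t, A_{t-1}⁻¹ ζ_{t-1}⟫ ≤ 0` for all `t`, the cumulative potential satisfies
`Φ_T = ⟪ζ_T, A_T⁻¹ ζ_T⟫ ≤ Σ_t ⟪g_t, A_t⁻¹ g_t⟫`. -/
theorem corectron_cp_ep_inequality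
    {V : Type*} [NormedAddCommGroup V] [InnerProductSpace ℝ V] [CompleteSpace V]
    (T : ℕ) (lam : ℝ) (hlam : 0 < lam)
    (g : Fin T → V) (A : ℕ → (V →L[ℝ] V)) (ζ : ℕ → V)
    (hA0 : A 0 = lam • (1 : V →L[ℝ] V)) (hζ0 : ζ 0 = 0)
    (hA : ∀ t : Fin T, A ((t : ℕ) + 1) = A t + rankOne (g t))
    (hζ : ∀ t : Fin T, ζ ((t : ℕ) + 1) = ζ t + g t)
    (hsign : ∀ t : Fin T, ⟪g t, (Ring.inverse (A t)) (ζ t)⟫ ≤ 0) :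
    ⟪ζ T, (Ring.inverse (A T)) (ζ T)⟫ ≤
      ∑ t : Fin T, ⟪g t, (Ring.inverse (A ((t : ℕ) + 1))) (g t)⟫ := by
  classical
  -- the increments of the right-hand side, as a function on ℕ
  set F : ℕ → ℝ := fun i =>
    if h : i < T then ⟪g ⟨i, h⟩, (Ring.inverse (A (i + 1))) (g ⟨i, h⟩)⟫ else 0 with hF
  -- main induction
  have key : ∀ n : ℕ, n ≤ T →
      (∀ v w, ⟪A n v, w⟫ = ⟪v, A n w⟫) ∧ (∀ v, lam * ‖v‖ ^ 2 ≤ ⟪v, A n v⟫) ∧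
        ⟪ζ n, (Ring.inverse (A n)) (ζ n)⟫ ≤ ∑ i ∈ Finset.range n, F i := by
    intro n
    induction n with
    | zero =>
      intro _
      refine ⟨?_, ?_, ?_⟩
      · intro v w
        rw [hA0]
        simp [real_inner_smul_left, real_inner_smul_right, real_inner_comm]
      · intro v
        rw [hA0]
        simp [real_inner_smul_right, real_inner_self_eq_norm_sq, mul_comm]
      · simp [hζ0]
    | succ n IH =>
      intro hn1
      have hn : n < T := hn1
      obtain ⟨hsymB, hcoB, hΦ⟩ := IH hn.le
      set t : Fin T := ⟨n, hn⟩ with ht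
      set a : V := g t with ha
      set B : V →L[ℝ] V := A n with hB
      have hCdef : A (n + 1) = B + rankOne a := hA t
      set C : V →L[ℝ] V := A (n + 1) with hC
      have hCapp : ∀ v, C v = B v + ⟪a, v⟫ • a := by
        intro v; rw [hCdef]; rfl
      -- symmetry of C
      have hsymC : ∀ v w, ⟪C v, w⟫ = ⟪v, C w⟫ := by
        intro v w
        rw [hCapp, hCapp, inner_add_left, inner_add_right, hsymB,
          real_inner_smul_left, real_inner_smul_right, real_inner_comm v a]
        ring
      -- coercivity of C
      have hcoC : ∀ v, lam * ‖v‖ ^ 2 ≤ ⟪v, C v⟫ := by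
        intro v
        rw [hCapp, inner_add_right, real_inner_smul_right]
        have : 0 ≤ ⟪a, v⟫ * ⟪v, a⟫ := by
          rw [real_inner_comm a v]; exact mul_self_nonneg _
        linarith [hcoB v]
      -- units
      have hBu : IsUnit B := coercive_isUnit hlam hcoB
      have hCu : IsUnit C := coercive_isUnit hlam hcoC
      set Binv := Ring.inverse B with hBi
      set Cinv := Ring.inverse C with hCi
      have hBinv : ∀ v, B (Binv v) = v := by
        intro v
        have h1 := Ring.mul_inverse_cancel B hBu
        have := DFunLike.congr_fun h1 v
        simpa [ContinuousLinearMap.mul_apply] using this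
      have hBinv' : ∀ v, Binv (B v) = v := by
        intro v
        have h1 := Ring.inverse_mul_cancel B hBu
        have := DFunLike.congr_fun h1 v
        simpa [ContinuousLinearMap.mul_apply] using this
      have hCinv : ∀ v, C (Cinv v) = v := by
        intro v
        have h1 := Ring.mul_inverse_cancel C hCu
        have := DFunLike.congr_fun h1 v
        simpa [ContinuousLinearMap.mul_apply] using this
      -- symmetry of inverses
      have hsymBi : ∀ v w, ⟪Binv v, w⟫ = ⟪v, Binv w⟫ := by
        intro v w
        calc ⟪Binv v, w⟫ = ⟪Binv v, B (Binv w)⟫ := by rw [hBinv]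
          _ = ⟪B (Binv v), Binv w⟫ := (hsymB _ _).symm
          _ = ⟪v, Binv w⟫ := by rw [hBinv]
      have hsymCi : ∀ v w, ⟪Cinv v, w⟫ = ⟪v, Cinv w⟫ := by
        intro v w
        calc ⟪Cinv v, w⟫ = ⟪Cinv v, C (Cinv w)⟫ := by rw [hCinv]
          _ = ⟪C (Cinv v), Cinv w⟫ := (hsymC _ _).symm
          _ = ⟪v, Cinv w⟫ := by rw [hCinv]
      -- notation
      set z : V := ζ n with hz
      set w : V := Binv z with hw
      set u : V := Cinv z with hu
      have hp : ⟪a, w⟫ ≤ 0 := hsign t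
      -- q = ⟪a, Binv a⟫ ≥ 0
      have hq : 0 ≤ ⟪a, Binv a⟫ := by
        have h1 : ⟪a, Binv a⟫ = ⟪Binv a, B (Binv a)⟫ := by
          rw [← hBinv a, hBinv' (Binv a)]
          exact real_inner_comm _ _
        rw [h1]
        have := hcoB (Binv a)
        nlinarith [sq_nonneg ‖Binv a‖]
      -- w = u + ⟪a,u⟫ • Binv a
      have hwu : w = u + ⟪a, u⟫ • Binv a := by
        have h1 : z = B u + ⟪a, u⟫ • a := by rw [← hCapp u, hu, hCinv]
        rw [hw, h1, map_add, hBinv', map_smul]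
      have hau : ⟪a, u⟫ * (1 + ⟪a, Binv a⟫) = ⟪a, w⟫ := by
        rw [hwu, inner_add_right, real_inner_smul_right]; ring
      have h1q : 0 < 1 + ⟪a, Binv a⟫ := by linarith
      have hau_nonpos : ⟪a, u⟫ ≤ 0 := by
        by_contra hpos
        push_neg at hpos
        nlinarith
      -- monotonicity: ⟪z, u⟫ ≤ ⟪z, w⟫
      have hmono : ⟪z, u⟫ ≤ ⟪z, w⟫ := by
        have hBw : B w = z := by rw [hw, hBinv]
        have h2 : ⟪z, w⟫ = ⟪z, u⟫ + ⟪a, u⟫ * ⟪a, w⟫ :=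
          calc ⟪z, w⟫ = ⟪C u, w⟫ := by rw [hu, hCinv]
            _ = ⟪B u, w⟫ + ⟪a, u⟫ * ⟪a, w⟫ := by
                rw [hCapp, inner_add_left, real_inner_smul_left]
            _ = ⟪u, z⟫ + ⟪a, u⟫ * ⟪a, w⟫ := by rw [hsymB, hBw]
            _ = ⟪z, u⟫ + ⟪a, u⟫ * ⟪a, w⟫ := by rw [real_inner_comm]
        nlinarith
      refine ⟨hsymC, hcoC, ?_⟩
      have hζ1 : ζ (n + 1) = z + a := hζ t
      have hexp : ⟪ζ (n + 1), Cinv (ζ (n + 1))⟫ =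
          ⟪z, u⟫ + 2 * ⟪a, u⟫ + ⟪a, Cinv a⟫ := by
        rw [hζ1, inner_add_left, map_add, inner_add_right, inner_add_right]
        have : ⟪z, Cinv a⟫ = ⟪a, u⟫ := by
          rw [← hsymCi, real_inner_comm, hu]
        rw [this, hu]
        ring
      have hFn : F n = ⟪a, Cinv a⟫ := by
        rw [hF]
        simp only [hn, dif_pos]
        rfl
      have hsum : ∑ i ∈ Finset.range (n + 1), F i = (∑ i ∈ Finset.range n, F i) + F n :=
        Finset.sum_range_succ F n
      rw [hexp, hsum, hFn]
      have hΦ' : ⟪z, w⟫ ≤ ∑ i ∈ Finset.range n, F i := hΦ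
      linarith
  obtain ⟨_, _, hfin⟩ := key T le_rfl
  refine hfin.trans_eq ?_
  rw [← Fin.sum_univ_eq_sum_range F T]
  exact Finset.sum_congr rfl fun t _ => by simp [hF]
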